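/- Let κ > 0, η > 0, ς ∈ (0, 2η), and let x, N ∈ ℝ^N with ‖N‖ = 1. Suppose F ∈ ℝ^N satisfies ⟨F − x, N⟩ < −ς/2 and ‖F − (x + (1/κ)N)‖ < η + 1/κ. Then for every t ∈ (ς/2, η), ‖F − (x − tN)‖² < η² + 2η/κ − ς/κ − tς + t², and consequently ‖F − (x − tN)‖ < √(2η² + (2/κ − ς)η − ς/κ). -/
import Mathlib


open RealInnerProductSpace

/-- The key Euclidean estimate near the boundary of a strongly convex domain:
if `⟨F − x, N⟩ < −ς/2` and `‖F − (x + (1/κ)N)‖ < η + 1/κ` with `‖N‖ = 1`, then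
for every `t ∈ (ς/2, η)`,
`‖F − (x − tN)‖² < η² + 2η/κ − ς/κ − tς + t²`, and consequently
`‖F − (x − tN)‖ < √(2η² + (2/κ − ς)η − ς/κ)`. -/
theorem strongly_convex_distance_estimate
    {E : Type*} [NormedAddCommGroup E] [InnerProductSpace ℝ E]
    (κ η ς : ℝ) (hκ : 0 < κ) (hη : 0 < η) (hς : ς ∈ Set.Ioo 0 (2 * η))
    (x N F : E) (hN : ‖N‖ = 1)
    (h1 : ⟪F - x, N⟫ < -ς / 2)
    (h2 : ‖F - (x + (1 / κ) • N)‖ < η + 1 / κ) :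
    ∀ t ∈ Set.Ioo (ς / 2) η,
      ‖F - (x - t • N)‖ ^ 2 < η ^ 2 + 2 * η / κ - ς / κ - t * ς + t ^ 2 ∧
      ‖F - (x - t • N)‖ < Real.sqrt (2 * η ^ 2 + (2 / κ - ς) * η - ς / κ) := by
  intro t ht
  obtain ⟨ht1, ht2⟩ := ht
  obtain ⟨hς1, hς2⟩ := hς
  have hvsub : F - (x + (1 / κ) • N) = (F - x) - (1 / κ) • N := by abel
  have hvadd : F - (x - t • N) = (F - x) + t • N := by abel
  have hsq : ‖(F - x) - (1 / κ) • N‖ ^ 2 < (η + 1 / κ) ^ 2 := by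
    rw [← hvsub]
    nlinarith [norm_nonneg (F - (x + (1 / κ) • N)), h2]
  have hexp1 : ‖(F - x) - (1 / κ) • N‖ ^ 2
      = ‖F - x‖ ^ 2 - 2 * ((1 / κ) * ⟪F - x, N⟫) + (1 / κ) ^ 2 := by
    rw [@norm_sub_sq_real, real_inner_smul_right, norm_smul, mul_pow]
    simp [hN, abs_of_pos (show (0:ℝ) < 1/κ by positivity)]
  have key : ‖F - x‖ ^ 2 < η ^ 2 + 2 * η / κ - ς / κ := by
    rw [hexp1] at hsq
    have hκ' : (0:ℝ) < 1 / κ := by positivity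
    have h3 : 1 / κ * ⟪F - x, N⟫ < -(ς / κ) / 2 := by
      have := mul_lt_mul_of_pos_left h1 hκ'
      calc 1 / κ * ⟪F - x, N⟫ < 1 / κ * (-ς / 2) := this
        _ = -(ς / κ) / 2 := by ring
    have e : (η + 1 / κ) ^ 2 = η ^ 2 + 2 * η / κ + (1 / κ) ^ 2 := by ring
    rw [e] at hsq
    linarith
  have hexp2 : ‖F - (x - t • N)‖ ^ 2
      = ‖F - x‖ ^ 2 + 2 * (t * ⟪F - x, N⟫) + t ^ 2 := by
    rw [hvadd, @norm_add_sq_real, real_inner_smul_right, norm_smul, mul_pow]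
    simp [hN, sq_abs]
  have ht0 : 0 < t := lt_trans (by positivity) ht1
  have main : ‖F - (x - t • N)‖ ^ 2 < η ^ 2 + 2 * η / κ - ς / κ - t * ς + t ^ 2 := by
    rw [hexp2]
    have h4 : t * ⟪F - x, N⟫ < t * (-ς / 2) := mul_lt_mul_of_pos_left h1 ht0
    have e : t * (-ς / 2) = -(t * ς) / 2 := by ring
    rw [e] at h4
    linarith
  refine ⟨main, ?_⟩
  rw [Real.lt_sqrt (norm_nonneg _)]
  have hp : 0 < (η - t) * (η + t - ς) := mul_pos (by linarith) (by linarith)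
  have e2 : (η - t) * (η + t - ς) = η ^ 2 - ς * η + t * ς - t ^ 2 := by ring
  rw [e2] at hp
  have e3 : (2 / κ - ς) * η = 2 * η / κ - ς * η := by ring
  rw [e3]
  linarith
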